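/- Let L > 0. Then lim_{t→0⁺} (6/(4πt)) [ ∫₀^{L/4} ∫₀^{√3 x} exp(−3(x² + y²)/(4t)) dy dx + ∫_{L/4}^{L/2} ∫₀^{(L−x)/√3} exp(−3(x² + y²)/(4t)) dy dx ] = 1/3. This is the total contribution of the two nontrivial rotations R_{a₂}·R_{a₁} and (R_{a₂}·R_{a₁})² of the dihedral group Dih₆ to the short-time partition function of the equilateral triangle of side length L, summed over its three congruent subdomains. -/

import Mathlib

open Real Filter MeasureTheory

section AuxSector
open Real Filter MeasureTheory intervalIntegral Set

lemma integral_x_exp {k : ℝ} (hk : 0 < k) (R : ℝ) :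
    ∫ x in (0:ℝ)..R, x * Real.exp (-(k * x ^ 2))
      = (1 - Real.exp (-(k * R ^ 2))) / (2 * k) := by
  have hder : ∀ x ∈ Set.uIcc (0:ℝ) R,
      HasDerivAt (fun x : ℝ => -Real.exp (-(k * x ^ 2)) / (2 * k))
        (x * Real.exp (-(k * x ^ 2))) x := by
    intro x _
    have h1 : HasDerivAt (fun x : ℝ => -(k * x ^ 2)) (-(k * (2 * x))) x := by
      exact (((hasDerivAt_pow 2 x).const_mul k).neg).congr_deriv (by norm_num)
    have h3 := (h1.exp.neg.div_const (2 * k))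
    refine h3.congr_deriv ?_
    field_simp
  have hcont : IntervalIntegrable (fun x : ℝ => x * Real.exp (-(k * x ^ 2))) volume 0 R := by
    apply Continuous.intervalIntegrable; fun_prop
  rw [intervalIntegral.integral_eq_sub_of_hasDerivAt hder hcont]
  simp
  field_simp
  ring
lemma sector_eq {c : ℝ} (hc : 0 < c) {R : ℝ} (hR : 0 ≤ R) :
    (∫ x in (0:ℝ)..R, ∫ y in (0:ℝ)..(Real.sqrt 3 * x),
        Real.exp (-(c * (x ^ 2 + y ^ 2))))
      = ∫ s in (0:ℝ)..Real.sqrt 3,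
          (1 - Real.exp (-(c * (1 + s ^ 2) * R ^ 2))) / (2 * (c * (1 + s ^ 2))) := by
  have hs3 : (0:ℝ) ≤ Real.sqrt 3 := Real.sqrt_nonneg 3
  -- Step 1: rewrite the inner integral via y = s * x
  have hA : ∀ x ∈ Set.uIcc (0:ℝ) R,
      (∫ y in (0:ℝ)..(Real.sqrt 3 * x), Real.exp (-(c * (x ^ 2 + y ^ 2))))
        = ∫ s in (0:ℝ)..Real.sqrt 3, x * Real.exp (-(c * (1 + s ^ 2) * x ^ 2)) := by
    intro x hx
    have h1 := intervalIntegral.smul_integral_comp_mul_right (a := (0:ℝ))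
      (b := Real.sqrt 3) (fun y => Real.exp (-(c * (x ^ 2 + y ^ 2)))) x
    simp only [zero_mul] at h1
    rw [← h1, ← intervalIntegral.integral_smul]
    apply intervalIntegral.integral_congr
    intro s _
    simp only [smul_eq_mul]
    congr 1
    ring_nf
  rw [intervalIntegral.integral_congr hA]
  -- Step 2: Fubini
  have hgc : Continuous (Function.uncurry fun x s : ℝ => x * Real.exp (-(c * (1 + s ^ 2) * x ^ 2))) := by
    fun_prop
  have hint : Integrable (Function.uncurry fun x s : ℝ => x * Real.exp (-(c * (1 + s ^ 2) * x ^ 2)))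
      ((volume.restrict (Set.Ioc (0:ℝ) R)).prod (volume.restrict (Set.Ioc (0:ℝ) (Real.sqrt 3)))) := by
    rw [Measure.prod_restrict]
    apply (hgc.continuousOn.integrableOn_compact (isCompact_Icc.prod isCompact_Icc)).mono_set
    exact Set.prod_mono Set.Ioc_subset_Icc_self Set.Ioc_subset_Icc_self
  rw [intervalIntegral.integral_of_le hR]
  simp_rw [intervalIntegral.integral_of_le hs3]
  rw [MeasureTheory.integral_integral_swap hint]
  -- Step 3: inner integral closed form
  apply MeasureTheory.setIntegral_congr_fun measurableSet_Ioc
  intro s _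
  have hk : 0 < c * (1 + s ^ 2) := by positivity
  have h2 := integral_x_exp hk R
  rw [intervalIntegral.integral_of_le hR] at h2
  exact h2
lemma arctan_sqrt_three : Real.arctan (Real.sqrt 3) = Real.pi / 3 := by
  rw [← Real.tan_pi_div_three]
  exact Real.arctan_tan (by linarith [Real.pi_pos]) (by linarith [Real.pi_pos])

lemma baseline_integral {c : ℝ} (hc : 0 < c) :
    ∫ s in (0:ℝ)..Real.sqrt 3, 1 / (2 * (c * (1 + s ^ 2))) = Real.pi / (6 * c) := by
  have h : ∀ s ∈ Set.uIcc (0:ℝ) (Real.sqrt 3),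
      1 / (2 * (c * (1 + s ^ 2))) = (1 / (2 * c)) * (1 / (1 + s ^ 2)) := by
    intro s _
    have h1 : (1 : ℝ) + s ^ 2 ≠ 0 := by positivity
    field_simp
  rw [intervalIntegral.integral_congr h, intervalIntegral.integral_const_mul,
    integral_one_div_one_add_sq, _root_.arctan_sqrt_three, Real.arctan_zero]
  ring

lemma sector_upper {c : ℝ} (hc : 0 < c) {R : ℝ} (hR : 0 ≤ R) :
    (∫ x in (0:ℝ)..R, ∫ y in (0:ℝ)..(Real.sqrt 3 * x),
        Real.exp (-(c * (x ^ 2 + y ^ 2)))) ≤ Real.pi / (6 * c) := by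
  rw [sector_eq hc hR, ← baseline_integral hc]
  have hden : Continuous fun s : ℝ => 2 * (c * (1 + s ^ 2)) := by fun_prop
  have hdenne : ∀ s : ℝ, 2 * (c * (1 + s ^ 2)) ≠ 0 := fun s => by positivity
  have i1 : IntervalIntegrable
      (fun s : ℝ => (1 - Real.exp (-(c * (1 + s ^ 2) * R ^ 2))) / (2 * (c * (1 + s ^ 2))))
      volume 0 (Real.sqrt 3) :=
    (Continuous.div (by fun_prop) hden hdenne).intervalIntegrable _ _
  have i2 : IntervalIntegrable (fun s : ℝ => 1 / (2 * (c * (1 + s ^ 2))))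
      volume 0 (Real.sqrt 3) :=
    (Continuous.div continuous_const hden hdenne).intervalIntegrable _ _
  apply intervalIntegral.integral_mono_on (Real.sqrt_nonneg 3) i1 i2
  intro s _
  have hD : (0:ℝ) < 2 * (c * (1 + s ^ 2)) := by positivity
  exact div_le_div₀ (by norm_num)
    (by linarith [Real.exp_nonneg (-(c * (1 + s ^ 2) * R ^ 2))]) hD le_rfl

lemma sector_lower {c : ℝ} (hc : 0 < c) {R : ℝ} (hR : 0 ≤ R) :
    Real.pi / (6 * c) - Real.sqrt 3 * Real.exp (-(c * R ^ 2)) / (2 * c)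
      ≤ ∫ x in (0:ℝ)..R, ∫ y in (0:ℝ)..(Real.sqrt 3 * x),
          Real.exp (-(c * (x ^ 2 + y ^ 2))) := by
  rw [sector_eq hc hR]
  have hden : Continuous fun s : ℝ => 2 * (c * (1 + s ^ 2)) := by fun_prop
  have hdenne : ∀ s : ℝ, 2 * (c * (1 + s ^ 2)) ≠ 0 := fun s => by positivity
  have i2 : IntervalIntegrable (fun s : ℝ => 1 / (2 * (c * (1 + s ^ 2))))
      volume 0 (Real.sqrt 3) :=
    (Continuous.div continuous_const hden hdenne).intervalIntegrable _ _
  have i1 : IntervalIntegrable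
      (fun s : ℝ => (1 - Real.exp (-(c * (1 + s ^ 2) * R ^ 2))) / (2 * (c * (1 + s ^ 2))))
      volume 0 (Real.sqrt 3) :=
    (Continuous.div (by fun_prop) hden hdenne).intervalIntegrable _ _
  have hlo : ∫ s in (0:ℝ)..Real.sqrt 3,
      (1 / (2 * (c * (1 + s ^ 2))) - Real.exp (-(c * R ^ 2)) / (2 * c))
      = Real.pi / (6 * c) - Real.sqrt 3 * Real.exp (-(c * R ^ 2)) / (2 * c) := by
    rw [intervalIntegral.integral_sub i2 intervalIntegrable_const, baseline_integral hc,
      intervalIntegral.integral_const, smul_eq_mul]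
    ring
  rw [← hlo]
  apply intervalIntegral.integral_mono_on (Real.sqrt_nonneg 3)
    (i2.sub intervalIntegrable_const) i1
  intro s _
  have hD : (0:ℝ) < 2 * (c * (1 + s ^ 2)) := by positivity
  have h1 : Real.exp (-(c * (1 + s ^ 2) * R ^ 2)) / (2 * (c * (1 + s ^ 2)))
      ≤ Real.exp (-(c * R ^ 2)) / (2 * c) := by
    apply div_le_div₀ (Real.exp_nonneg _)
      (Real.exp_le_exp.2 (by nlinarith [mul_nonneg (mul_nonneg hc.le (sq_nonneg s)) (sq_nonneg R)]))
      (by positivity)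
      (by nlinarith [mul_nonneg hc.le (sq_nonneg s)])
  have h2 : (1 - Real.exp (-(c * (1 + s ^ 2) * R ^ 2))) / (2 * (c * (1 + s ^ 2)))
      = 1 / (2 * (c * (1 + s ^ 2)))
        - Real.exp (-(c * (1 + s ^ 2) * R ^ 2)) / (2 * (c * (1 + s ^ 2))) := by
    ring
  rw [h2]
  linarith

end AuxSector

/-- The total contribution of the two nontrivial rotations of `Dih₆` to the short-time
partition function of the equilateral triangle of side `L`, summed over its three
congruent subdomains:
`lim_{t→0⁺} (6/(4πt)) [∫₀^{L/4}∫₀^{√3 x} e^{−3(x²+y²)/(4t)} dy dx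
  + ∫_{L/4}^{L/2}∫₀^{(L−x)/√3} e^{−3(x²+y²)/(4t)} dy dx] = 1/3`. -/
theorem equilateral_rotation_contribution (L : ℝ) (hL : 0 < L) :
    Tendsto
      (fun t : ℝ =>
        (6 / (4 * Real.pi * t)) *
          ((∫ x in (0:ℝ)..(L / 4), ∫ y in (0:ℝ)..(Real.sqrt 3 * x),
              Real.exp (-(3 * (x ^ 2 + y ^ 2)) / (4 * t))) +
            ∫ x in (L / 4)..(L / 2), ∫ y in (0:ℝ)..((L - x) / Real.sqrt 3),
              Real.exp (-(3 * (x ^ 2 + y ^ 2)) / (4 * t))))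
      (nhdsWithin 0 (Set.Ioi 0)) (nhds (1 / 3)) := by
  have hpi := Real.pi_pos
  have hs3 : (0:ℝ) < Real.sqrt 3 := Real.sqrt_pos.2 (by norm_num)
  have hsq3 : Real.sqrt 3 ^ 2 = 3 := Real.sq_sqrt (by norm_num)
  set bfun : ℝ → ℝ := fun t => Real.sqrt 3 / Real.pi * Real.exp (-(3 / (4 * t) * (L / 4) ^ 2))
    with hbfun
  -- pointwise bounds for t > 0
  have hbounds : ∀ t ∈ Set.Ioi (0:ℝ),
      1 / 3 - bfun t ≤
        (6 / (4 * Real.pi * t)) *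
          ((∫ x in (0:ℝ)..(L / 4), ∫ y in (0:ℝ)..(Real.sqrt 3 * x),
              Real.exp (-(3 * (x ^ 2 + y ^ 2)) / (4 * t))) +
            ∫ x in (L / 4)..(L / 2), ∫ y in (0:ℝ)..((L - x) / Real.sqrt 3),
              Real.exp (-(3 * (x ^ 2 + y ^ 2)) / (4 * t))) ∧
        (6 / (4 * Real.pi * t)) *
          ((∫ x in (0:ℝ)..(L / 4), ∫ y in (0:ℝ)..(Real.sqrt 3 * x),
              Real.exp (-(3 * (x ^ 2 + y ^ 2)) / (4 * t))) +
            ∫ x in (L / 4)..(L / 2), ∫ y in (0:ℝ)..((L - x) / Real.sqrt 3),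
              Real.exp (-(3 * (x ^ 2 + y ^ 2)) / (4 * t))) ≤ 1 / 3 := by
    intro t ht
    have ht0 : (0:ℝ) < t := ht
    have hc : (0:ℝ) < 3 / (4 * t) := by positivity
    have he : ∀ x y : ℝ, -(3 * (x ^ 2 + y ^ 2)) / (4 * t)
        = -(3 / (4 * t) * (x ^ 2 + y ^ 2)) := fun x y => by ring
    simp only [he]
    set c : ℝ := 3 / (4 * t) with hcdef
    have hcont2 : Continuous (Function.uncurry fun x y : ℝ =>
        Real.exp (-(c * (x ^ 2 + y ^ 2)))) := by fun_prop
    have g1 : Continuous fun x : ℝ => ∫ y in (0:ℝ)..(Real.sqrt 3 * x),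
        Real.exp (-(c * (x ^ 2 + y ^ 2))) :=
      intervalIntegral.continuous_parametric_intervalIntegral_of_continuous hcont2 (by fun_prop)
    have g2 : Continuous fun x : ℝ => ∫ y in (0:ℝ)..((L - x) / Real.sqrt 3),
        Real.exp (-(c * (x ^ 2 + y ^ 2))) :=
      intervalIntegral.continuous_parametric_intervalIntegral_of_continuous hcont2 (by fun_prop)
    set A := ∫ x in (0:ℝ)..(L / 4), ∫ y in (0:ℝ)..(Real.sqrt 3 * x),
        Real.exp (-(c * (x ^ 2 + y ^ 2))) with hA
    set B := ∫ x in (L / 4)..(L / 2), ∫ y in (0:ℝ)..((L - x) / Real.sqrt 3),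
        Real.exp (-(c * (x ^ 2 + y ^ 2))) with hB
    set C := ∫ x in (L / 4)..(L / 2), ∫ y in (0:ℝ)..(Real.sqrt 3 * x),
        Real.exp (-(c * (x ^ 2 + y ^ 2))) with hC
    have hBnonneg : 0 ≤ B := by
      apply intervalIntegral.integral_nonneg (by linarith)
      intro x hx
      apply intervalIntegral.integral_nonneg
      · apply div_nonneg _ hs3.le
        linarith [hx.2]
      · intro y _
        exact Real.exp_nonneg _
    have hBC : B ≤ C := by
      apply intervalIntegral.integral_mono_on (by linarith)
        (g2.intervalIntegrable _ _) (g1.intervalIntegrable _ _)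
      intro x hx
      have hxL : L / 4 ≤ x := hx.1
      have hcut0 : 0 ≤ (L - x) / Real.sqrt 3 := by
        apply div_nonneg _ hs3.le
        linarith [hx.2]
      have hcutle : (L - x) / Real.sqrt 3 ≤ Real.sqrt 3 * x := by
        rw [div_le_iff₀ hs3]
        nlinarith [hsq3, hs3.le]
      have hsplit := intervalIntegral.integral_add_adjacent_intervals
        (μ := volume) (a := (0:ℝ)) (b := (L - x) / Real.sqrt 3) (c := Real.sqrt 3 * x)
        (f := fun y => Real.exp (-(c * (x ^ 2 + y ^ 2))))
        (Continuous.intervalIntegrable (by fun_prop) _ _)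
        (Continuous.intervalIntegrable (by fun_prop) _ _)
      have htail : 0 ≤ ∫ y in ((L - x) / Real.sqrt 3)..(Real.sqrt 3 * x),
          Real.exp (-(c * (x ^ 2 + y ^ 2))) :=
        intervalIntegral.integral_nonneg hcutle (fun y _ => Real.exp_nonneg _)
      linarith [hsplit.symm.le]
    have hAC : A + C = ∫ x in (0:ℝ)..(L / 2), ∫ y in (0:ℝ)..(Real.sqrt 3 * x),
        Real.exp (-(c * (x ^ 2 + y ^ 2))) :=
      intervalIntegral.integral_add_adjacent_intervals
        (g1.intervalIntegrable _ _) (g1.intervalIntegrable _ _)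
    have hup : A + B ≤ Real.pi / (6 * c) := by
      have := sector_upper hc (show (0:ℝ) ≤ L / 2 by linarith)
      rw [← hAC] at this
      linarith
    have hlow : Real.pi / (6 * c) - Real.sqrt 3 * Real.exp (-(c * (L / 4) ^ 2)) / (2 * c)
        ≤ A + B := by
      have := sector_lower hc (show (0:ℝ) ≤ L / 4 by linarith)
      linarith
    have hcoef : 0 < 6 / (4 * Real.pi * t) := by positivity
    have key1 : (6 / (4 * Real.pi * t)) * (Real.pi / (6 * c)) = 1 / 3 := by
      rw [hcdef]
      field_simp
    have key2 : (6 / (4 * Real.pi * t)) *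
        (Real.sqrt 3 * Real.exp (-(c * (L / 4) ^ 2)) / (2 * c))
        = Real.sqrt 3 / Real.pi * Real.exp (-(c * (L / 4) ^ 2)) := by
      rw [hcdef]
      field_simp
      ring
    constructor
    · have h1 := mul_le_mul_of_nonneg_left hlow hcoef.le
      rw [mul_sub, key1, key2] at h1
      exact h1
    · have h2 := mul_le_mul_of_nonneg_left hup hcoef.le
      rw [key1] at h2
      exact h2
  -- squeeze
  have htop : Tendsto (fun t : ℝ => 3 / (4 * t) * (L / 4) ^ 2)
      (nhdsWithin 0 (Set.Ioi 0)) atTop := by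
    have heq : ∀ t : ℝ, 3 / (4 * t) * (L / 4) ^ 2 = (3 * (L / 4) ^ 2 / 4) * t⁻¹ :=
      fun t => by ring
    simp only [heq]
    exact Tendsto.const_mul_atTop (by positivity) tendsto_inv_nhdsGT_zero
  have hexp0 : Tendsto (fun t : ℝ => Real.exp (-(3 / (4 * t) * (L / 4) ^ 2)))
      (nhdsWithin 0 (Set.Ioi 0)) (nhds 0) :=
    Real.tendsto_exp_atBot.comp (tendsto_neg_atTop_atBot.comp htop)
  have hbf : Tendsto (fun t : ℝ => 1 / 3 - bfun t) (nhdsWithin 0 (Set.Ioi 0)) (nhds (1 / 3)) := by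
    have := tendsto_const_nhds (x := (1/3 : ℝ)) (f := nhdsWithin (0:ℝ) (Set.Ioi 0))
    have h2 := this.sub (hexp0.const_mul (Real.sqrt 3 / Real.pi))
    simpa using h2
  apply tendsto_of_tendsto_of_tendsto_of_le_of_le' hbf tendsto_const_nhds
  · filter_upwards [self_mem_nhdsWithin] with t ht
    exact (hbounds t ht).1
  · filter_upwards [self_mem_nhdsWithin] with t ht
    exact (hbounds t ht).2
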